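/- Let d ≥ 1, E := ℝ^d × ℝ^d with the Euclidean inner product, J : E → E the linear map J(q,p) = (p,−q), g : ℝ → ℝ twice continuously differentiable, and f : E → E the Euclidean Hamiltonian vector field f(u) = g(‖u‖²/2) • J u. Apply an explicit s-stage Runge–Kutta method with strictly lower triangular coefficients a and weights b satisfying the second-order conditions Σ_i b_i = 1 and Σ_i b_i c_i = 1/2 (where c_i := Σ_j a_{ij}) to f with initial value u₀ and step size h, producing update u₊(h). Then, as h → 0, 2‖u₀‖² − 2⟨u₊(h), u₀⟩ = g(‖u₀‖²/2)² ‖u₀‖² h² + O(h³). -/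

import Mathlib

open scoped RealInnerProductSpace
open Asymptotics Filter Topology

noncomputable section

/-- The phase space `E = ℝ^d × ℝ^d`, equipped with the Euclidean inner product. -/
abbrev E (d : ℕ) : Type :=
  WithLp 2 (EuclideanSpace ℝ (Fin d) × EuclideanSpace ℝ (Fin d))

/-- The canonical symplectic rotation `J(q,p) = (p, -q)`. -/
def J (d : ℕ) (u : E d) : E d := WithLp.toLp 2 (u.ofLp.2, -u.ofLp.1)

/-- For the Euclidean Hamiltonian vector field `f(u) = g(‖u‖²/2) • J u` (`g` of class
`C²`) and an explicit Runge–Kutta method satisfying the second-order conditions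
`∑ᵢ bᵢ = 1` and `∑ᵢ bᵢ cᵢ = 1/2`, the update `u₊(h)` satisfies
`2‖u₀‖² - 2⟪u₊(h), u₀⟫ = g(‖u₀‖²/2)² ‖u₀‖² h² + O(h³)` as `h → 0`. -/
theorem rk_numerator_expansion_euclidean_hamiltonian
    (d : ℕ) (hd : 1 ≤ d) (g : ℝ → ℝ) (hg : ContDiff ℝ 2 g)
    (f : E d → E d) (hf : ∀ u : E d, f u = g (‖u‖ ^ 2 / 2) • J d u)
    (s : ℕ) (a : Fin s → Fin s → ℝ) (ha : ∀ i j : Fin s, i ≤ j → a i j = 0)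
    (b : Fin s → ℝ) (hb1 : ∑ i, b i = 1) (hb2 : ∑ i, b i * (∑ j, a i j) = 1 / 2)
    (u₀ : E d) (y : ℝ → Fin s → E d)
    (hy : ∀ (h : ℝ) (i : Fin s), y h i = u₀ + h • ∑ j, a i j • f (y h j))
    (uplus : ℝ → E d) (hup : ∀ h : ℝ, uplus h = u₀ + h • ∑ i, b i • f (y h i)) :
    (fun h : ℝ => 2 * ‖u₀‖ ^ 2 - 2 * ⟪uplus h, u₀⟫
        - g (‖u₀‖ ^ 2 / 2) ^ 2 * ‖u₀‖ ^ 2 * h ^ 2)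
      =O[𝓝 (0 : ℝ)] fun h : ℝ => h ^ 3 := by
  -- basic facts about `J`
  have hJinner : ∀ u : E d, ⟪J d u, u⟫ = 0 := by
    intro u
    simp only [J, WithLp.prod_inner_apply]
    simp [real_inner_comm (WithLp.snd u) (WithLp.fst u)]
  have hforth : ∀ u : E d, ⟪f u, u⟫ = 0 := by
    intro u
    rw [hf u, real_inner_smul_left, hJinner, mul_zero]
  have hJnorm : ∀ u : E d, ⟪J d u, J d u⟫ = ‖u‖ ^ 2 := by
    intro u
    simp only [J, WithLp.prod_inner_apply, inner_neg_neg]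
    rw [← real_inner_self_eq_norm_sq u, WithLp.prod_inner_apply]
    exact add_comm _ _
  -- differentiability of `f`
  have hJ : Differentiable ℝ (J d) := by
    let e := WithLp.prodContinuousLinearEquiv 2 ℝ (EuclideanSpace ℝ (Fin d))
      (EuclideanSpace ℝ (Fin d))
    have he : J d = fun u => e.symm ((e u).2, -(e u).1) := by funext u; rfl
    rw [he]
    exact e.symm.differentiable.comp
      (Differentiable.prodMk (differentiable_snd.comp e.differentiable)
        ((differentiable_fst.comp e.differentiable).neg))
  have hfd : Differentiable ℝ f := by
    have hfe : f = fun u => g (‖u‖ ^ 2 / 2) • J d u := funext hf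
    rw [hfe]
    have hn : Differentiable ℝ fun u : E d => ‖u‖ ^ 2 / 2 := by
      have h1 : ContDiff ℝ 1 fun u : E d => ‖u‖ ^ 2 := contDiff_norm_sq ℝ
      simp only [div_eq_mul_inv]
      exact (h1.differentiable one_ne_zero).mul_const _
    exact ((hg.differentiable (by norm_num)).comp hn).smul hJ
  -- differentiability of the stages
  have hydiff : ∀ i : Fin s, DifferentiableAt ℝ (fun h => y h i) 0 := by
    have key : ∀ n : ℕ, ∀ i : Fin s, (i : ℕ) < n → DifferentiableAt ℝ (fun h => y h i) 0 := by
      intro n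
      induction n with
      | zero => intro i hi; omega
      | succ n IH =>
        intro i hi
        have hyi : (fun h => y h i) = fun h => u₀ + h • ∑ j, a i j • f (y h j) :=
          funext fun h => hy h i
        rw [hyi]
        refine (differentiableAt_const _).add ?_
        refine DifferentiableAt.fun_smul differentiableAt_fun_id ?_
        refine DifferentiableAt.fun_sum fun j _ => ?_
        by_cases hji : (j : ℕ) < (i : ℕ)
        · exact ((hfd _).comp 0 (IH j (by omega))).fun_const_smul (a i j)
        · have hz : a i j = 0 := ha i j (by rw [Fin.le_def]; omega)
          simp [hz]
    intro i; exact key (i + 1) i (by omega)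
  -- the key function S
  set g₀ : ℝ := g (‖u₀‖ ^ 2 / 2) with hg₀
  set S : ℝ → ℝ := fun h => ∑ i, b i * ∑ j, a i j * ⟪f (y h i), f (y h j)⟫ with hS
  -- exact identity for the numerator
  have hnum : ∀ h : ℝ, 2 * ‖u₀‖ ^ 2 - 2 * ⟪uplus h, u₀⟫ = 2 * h ^ 2 * S h := by
    intro h
    have hfyu : ∀ i : Fin s, ⟪f (y h i), u₀⟫ = -h * ∑ j, a i j * ⟪f (y h i), f (y h j)⟫ := by
      intro i
      have h1 : ⟪f (y h i), u₀⟫ = ⟪f (y h i), y h i⟫ - ⟪f (y h i), y h i - u₀⟫ := by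
        rw [inner_sub_right]; ring
      have h2 : ⟪f (y h i), y h i⟫ = 0 := hforth _
      have h3 : y h i - u₀ = h • ∑ j, a i j • f (y h j) := by rw [hy h i]; abel
      rw [h1, h2, h3, real_inner_smul_right, inner_sum]
      simp only [real_inner_smul_right]
      ring
    have expand : ∀ X : ℝ, 2 * ‖u₀‖ ^ 2 - 2 * (‖u₀‖ ^ 2 + X) = -2 * X := fun X => by ring
    rw [hup h, inner_add_left, real_inner_smul_left, sum_inner]
    simp only [real_inner_smul_left, hfyu, real_inner_self_eq_norm_sq, hS]
    rw [expand]
    simp only [Finset.mul_sum]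
    refine Finset.sum_congr rfl fun i _ => Finset.sum_congr rfl fun j _ => by ring
  -- value at 0
  have hy0 : ∀ i : Fin s, y 0 i = u₀ := by intro i; rw [hy 0 i]; simp
  have hfnorm : ⟪f u₀, f u₀⟫ = g₀ ^ 2 * ‖u₀‖ ^ 2 := by
    rw [hf u₀, real_inner_smul_left, real_inner_smul_right, hJnorm, ← hg₀]
    ring
  have hS0 : S 0 = 1 / 2 * (g₀ ^ 2 * ‖u₀‖ ^ 2) := by
    rw [hS]
    simp only [hy0, hfnorm]
    rw [← hb2, Finset.sum_mul]
    refine Finset.sum_congr rfl fun i _ => ?_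
    rw [← Finset.sum_mul]
    ring
  -- differentiability of S at 0
  have hSdiff : DifferentiableAt ℝ S 0 := by
    refine DifferentiableAt.fun_sum fun i _ => (DifferentiableAt.fun_sum fun j _ => ?_).const_mul _
    exact (((hfd _).comp 0 (hydiff i)).inner ℝ ((hfd _).comp 0 (hydiff j))).const_mul _
  have hO : (fun h : ℝ => S h - S 0) =O[𝓝 (0 : ℝ)] fun h : ℝ => h := by
    have := hSdiff.hasFDerivAt.isBigO_sub
    simpa using this
  -- finish
  have heq : (fun h : ℝ => 2 * ‖u₀‖ ^ 2 - 2 * ⟪uplus h, u₀⟫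
        - g (‖u₀‖ ^ 2 / 2) ^ 2 * ‖u₀‖ ^ 2 * h ^ 2)
      = fun h : ℝ => 2 * h ^ 2 * (S h - S 0) := by
    funext h
    rw [hnum h, hS0, ← hg₀]
    ring
  rw [heq]
  have h2 : (fun h : ℝ => h ^ 2 * (S h - S 0)) =O[𝓝 (0 : ℝ)] fun h : ℝ => h ^ 2 * h :=
    (isBigO_refl (fun h : ℝ => h ^ 2) _).mul hO
  have h3 : (fun h : ℝ => h ^ 2 * h) = fun h : ℝ => h ^ 3 := by funext h; ring
  calc (fun h : ℝ => 2 * h ^ 2 * (S h - S 0))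
      = fun h : ℝ => 2 * (h ^ 2 * (S h - S 0)) := by funext h; ring
    _ =O[𝓝 (0 : ℝ)] fun h : ℝ => h ^ 3 := by rw [← h3]; exact h2.const_mul_left 2
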